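/- arXiv:1701.03004 — 7 statements merged into one kernel-verified Lean document; each statement's English description precedes it below -/
import Mathlib

section
/- If an item's decayed frequency exceeds half the total decayed count of a cell's sub-stream, i.e., f_v > C_cell/2, then in a Space Saving summary with 2 counters satisfying |S| = C_cell and f_v ≤ f̂_v for monitored items and f_v ≤ f̂^min for unmonitored items, the item v is monitored and is the counter with maximum estimated frequency. -/
/-- If an item's decayed frequency exceeds half the total decayed count of a
cell's sub-stream (`f v > C_cell / 2`), then in a 2-counter Space Saving summary
(counters monitoring items `c₁, c₂` with values `e₁, e₂`) satisfying
`e₁ + e₂ = C_cell`, `f cᵢ ≤ eᵢ` and `f u ≤ min e₁ e₂` for unmonitored `u`,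
the item `v` is monitored and is the counter with maximum estimated frequency. -/
theorem majority_item_is_max_counter
    {α : Type*} [DecidableEq α]
    (c₁ c₂ : α) (e₁ e₂ Ccell : ℝ) (f : α → ℝ)
    (hsum : e₁ + e₂ = Ccell)
    (h₁ : f c₁ ≤ e₁) (h₂ : f c₂ ≤ e₂)
    (hun : ∀ u : α, u ≠ c₁ → u ≠ c₂ → f u ≤ min e₁ e₂)
    (v : α) (hv : f v > Ccell / 2) :
    (v = c₁ ∧ e₂ ≤ e₁) ∨ (v = c₂ ∧ e₁ ≤ e₂) := by
  subst hsum
  by_cases hv1 : v = c₁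
  · by_cases hle : e₂ ≤ e₁
    · exact Or.inl ⟨hv1, hle⟩
    · refine Or.inr ⟨?_, le_of_not_ge hle⟩
      by_contra hv2
      have := h₁
      rw [← hv1] at this
      linarith [le_of_not_ge hle]
  · by_cases hv2 : v = c₂
    · refine Or.inr ⟨hv2, ?_⟩
      by_contra hle
      have := h₂
      rw [← hv2] at this
      linarith [le_of_not_ge hle]
    · have := hun v hv1 hv2
      have := min_le_left e₁ e₂
      have := min_le_right e₁ e₂
      linarith
end

section
/- The combine operation on two Space Saving summaries preserves the lower-bound property: if for i = 1, 2 and every monitored item e ∈ Σ_i it holds that f_{N_i}(e) ≤ f̂_{S_i}(e), and for unmonitored items f_{N_i}(e) ≤ f̂_{S_i}^min, then for every item e in the combined summary S_C, the true combined frequency satisfies f_{N_1}(e) + f_{N_2}(e) ≤ f̂_{S_C}(e). -/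
open Finset in
/-- The combine operation on two Space Saving summaries preserves the
lower-bound property: for every item of the combined summary, the true combined
frequency is at most the combined counter value. -/
theorem combine_preserves_lower_bound
    {α : Type*} [DecidableEq α]
    (S₁ S₂ : Finset α) (est₁ est₂ : α → ℝ) (m₁ m₂ : ℝ)
    (f₁ f₂ : α → ℝ)
    (h₁ : ∀ e ∈ S₁, f₁ e ≤ est₁ e) (h₁' : ∀ e ∉ S₁, f₁ e ≤ m₁)
    (h₂ : ∀ e ∈ S₂, f₂ e ≤ est₂ e) (h₂' : ∀ e ∉ S₂, f₂ e ≤ m₂) :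
    ∀ e ∈ S₁ ∪ S₂,
      f₁ e + f₂ e ≤
        (if e ∈ S₁ then (if e ∈ S₂ then est₁ e + est₂ e else est₁ e + m₂)
         else est₂ e + m₁) := by
  intro e he
  rcases Finset.mem_union.mp he with h | h <;>
    by_cases h1 : e ∈ S₁ <;> by_cases h2 : e ∈ S₂ <;>
    simp only [h1, h2, if_true, if_false] <;>
    first
      | exact add_le_add (h₁ e h1) (h₂ e h2)
      | exact add_le_add (h₁ e h1) (h₂' e h2)
      | exact add_comm m₁ (est₂ e) ▸ add_le_add (h₁' e h1) (h₂ e h2)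
      | exact absurd h (by assumption)
end

section
/- (Merge exactness for k = 2, case |Σ_C| = 4.) If S₁ and S₂ are summaries of 2 counters each with |S₁| = |N₁|, |S₂| = |N₂| and Σ₁ ∩ Σ₂ = ∅, then the combined summary S_C over the 4 items has at least two counters equal to δ = f̂_{S₁}^min + f̂_{S₂}^min, δ is the minimum value in S_C, and the merged summary S_M obtained by keeping the 2 largest counters of S_C satisfies |S_M| = |N₁| + |N₂|. -/
open Finset in
/-- Merge exactness for `k = 2`, disjoint case `|Σ_C| = 4`: two full 2-counter
summaries `S₁ = {a₁, b₁}`, `S₂ = {a₂, b₂}` with disjoint supports and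
`|Sᵢ| = |Nᵢ|` are combined; the combined summary has at least two counters equal
to `δ = min va₁ vb₁ + min va₂ vb₂`, `δ` is its minimum value, and keeping the
two largest counters yields `|S_M| = |N₁| + |N₂|`. -/
theorem merge_exactness_disjoint_case
    {α : Type*} [DecidableEq α]
    (a₁ b₁ a₂ b₂ : α)
    (hdist : a₁ ≠ b₁ ∧ a₂ ≠ b₂ ∧ a₁ ≠ a₂ ∧ a₁ ≠ b₂ ∧ b₁ ≠ a₂ ∧ b₁ ≠ b₂)
    (va₁ vb₁ va₂ vb₂ N₁ N₂ : ℝ)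
    (hN₁ : va₁ + vb₁ = N₁) (hN₂ : va₂ + vb₂ = N₂)
    (cv : α → ℝ)
    (hcv₁ : cv a₁ = va₁ + min va₂ vb₂) (hcv₂ : cv b₁ = vb₁ + min va₂ vb₂)
    (hcv₃ : cv a₂ = va₂ + min va₁ vb₁) (hcv₄ : cv b₂ = vb₂ + min va₁ vb₁) :
    (∃ e ∈ ({a₁, b₁, a₂, b₂} : Finset α), ∃ e' ∈ ({a₁, b₁, a₂, b₂} : Finset α),
      e ≠ e' ∧ cv e = min va₁ vb₁ + min va₂ vb₂ ∧
        cv e' = min va₁ vb₁ + min va₂ vb₂ ∧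
      (∀ g ∈ ({a₁, b₁, a₂, b₂} : Finset α),
        min va₁ vb₁ + min va₂ vb₂ ≤ cv g) ∧
      ∑ g ∈ ({a₁, b₁, a₂, b₂} : Finset α) \ {e, e'}, cv g = N₁ + N₂) := by
  obtain ⟨h1, h2, h3, h4, h5, h6⟩ := hdist
  have hlow : ∀ g ∈ ({a₁, b₁, a₂, b₂} : Finset α),
      min va₁ vb₁ + min va₂ vb₂ ≤ cv g := by
    intro g hg
    simp only [Finset.mem_insert, Finset.mem_singleton] at hg
    rcases hg with rfl | rfl | rfl | rfl <;>
      simp only [hcv₁, hcv₂, hcv₃, hcv₄] <;>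
      linarith [min_le_left va₁ vb₁, min_le_right va₁ vb₁,
        min_le_left va₂ vb₂, min_le_right va₂ vb₂]
  have hbig : ∑ g ∈ ({a₁, b₁, a₂, b₂} : Finset α), cv g
      = cv a₁ + cv b₁ + cv a₂ + cv b₂ := by
    rw [Finset.sum_insert (by simp [h1, h3, h4]),
        Finset.sum_insert (by simp [h5, h6]),
        Finset.sum_insert (by simp [h2]), Finset.sum_singleton]
    ring
  rcases le_total va₁ vb₁ with h | h <;> rcases le_total va₂ vb₂ with h' | h'
  · have m1 := min_eq_left h; have m2 := min_eq_left h'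
    refine ⟨a₁, by simp, a₂, by simp, h3, by rw [hcv₁, m1, m2], by rw [hcv₃, m1, m2]; ring,
      hlow, ?_⟩
    rw [Finset.sum_sdiff_eq_sub (by intro x hx; simp at hx ⊢; tauto), hbig,
        Finset.sum_pair h3, hcv₁, hcv₂, hcv₃, hcv₄]
    linarith
  · have m1 := min_eq_left h; have m2 := min_eq_right h'
    refine ⟨a₁, by simp, b₂, by simp, h4, by rw [hcv₁, m1, m2], by rw [hcv₄, m1, m2]; ring,
      hlow, ?_⟩
    rw [Finset.sum_sdiff_eq_sub (by intro x hx; simp at hx ⊢; tauto), hbig,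
        Finset.sum_pair h4, hcv₁, hcv₂, hcv₃, hcv₄]
    linarith
  · have m1 := min_eq_right h; have m2 := min_eq_left h'
    refine ⟨b₁, by simp, a₂, by simp, h5, by rw [hcv₂, m1, m2], by rw [hcv₃, m1, m2]; ring,
      hlow, ?_⟩
    rw [Finset.sum_sdiff_eq_sub (by intro x hx; simp at hx ⊢; tauto), hbig,
        Finset.sum_pair h5, hcv₁, hcv₂, hcv₃, hcv₄]
    linarith
  · have m1 := min_eq_right h; have m2 := min_eq_right h'
    refine ⟨b₁, by simp, b₂, by simp, h6, by rw [hcv₂, m1, m2], by rw [hcv₄, m1, m2]; ring,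
      hlow, ?_⟩
    rw [Finset.sum_sdiff_eq_sub (by intro x hx; simp at hx ⊢; tauto), hbig,
        Finset.sum_pair h6, hcv₁, hcv₂, hcv₃, hcv₄]
    linarith
end

section
/- (Merge exactness for k = 2, general case.) Let S₁, S₂ be Space Saving summaries each with exactly 2 counters (possibly with empty counters of value 0), satisfying |S_i| = |N_i|. Form S_C by the combine rule and S_M by retaining the 2 counters of S_C with the greatest values. Then |S_M| = |N₁| + |N₂|, i.e., Σ over discarded counters of their values equals x·δ where x = |Σ_C| - 2 and δ = f̂_{S₁}^min + f̂_{S₂}^min. -/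
open Finset in
/-- Merge exactness for `k = 2`, general case: two Space Saving summaries with
(at most) 2 occupied counters each, satisfying `|Sᵢ| = |Nᵢ|`, are combined and
then truncated to the 2 largest counters.  The merged summary `S_M` satisfies
`|S_M| = |N₁| + |N₂|`, i.e. the discarded counters sum to `x·δ` where
`x = |Σ_C| - 2` and `δ = f̂_{S₁}^min + f̂_{S₂}^min`. -/
theorem merge_exactness_general
    {α : Type*} [DecidableEq α]
    (S₁ S₂ : Finset α) (hc₁ : S₁.card ≤ 2) (hc₂ : S₂.card ≤ 2)
    (est₁ est₂ : α → ℝ)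
    (hpos₁ : ∀ e ∈ S₁, 0 < est₁ e) (hz₁ : ∀ e ∉ S₁, est₁ e = 0)
    (hpos₂ : ∀ e ∈ S₂, 0 < est₂ e) (hz₂ : ∀ e ∉ S₂, est₂ e = 0)
    (m₁ m₂ : ℝ)
    (hm₁ : (∀ e ∈ S₁, m₁ ≤ est₁ e) ∧ (S₁.card = 2 → ∃ e ∈ S₁, est₁ e = m₁) ∧
      (S₁.card < 2 → m₁ = 0))
    (hm₂ : (∀ e ∈ S₂, m₂ ≤ est₂ e) ∧ (S₂.card = 2 → ∃ e ∈ S₂, est₂ e = m₂) ∧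
      (S₂.card < 2 → m₂ = 0))
    (N₁ N₂ : ℝ) (hN₁ : ∑ e ∈ S₁, est₁ e = N₁) (hN₂ : ∑ e ∈ S₂, est₂ e = N₂)
    (cv : α → ℝ)
    (hcv : ∀ e ∈ S₁ ∪ S₂, cv e =
      (if e ∈ S₁ then (if e ∈ S₂ then est₁ e + est₂ e else est₁ e + m₂)
       else est₂ e + m₁))
    (T : Finset α) (hT : T ⊆ S₁ ∪ S₂)
    (hTcard : T.card = min (S₁ ∪ S₂).card 2)
    (hTmax : ∀ e ∈ T, ∀ g ∈ (S₁ ∪ S₂) \ T, cv g ≤ cv e) :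
    ∑ e ∈ T, cv e = N₁ + N₂ ∧
    ∑ g ∈ (S₁ ∪ S₂) \ T, cv g = ((S₁ ∪ S₂).card - 2 : ℕ) * (m₁ + m₂) := by
  classical
  set U := S₁ ∪ S₂ with hUdef
  set δ := m₁ + m₂ with hδdef
  -- every combined counter value is at least δ
  have hδle : ∀ e ∈ U, δ ≤ cv e := by
    intro e he
    rw [hcv e he]
    by_cases h1 : e ∈ S₁
    · by_cases h2 : e ∈ S₂
      · simp only [h1, h2, if_true]
        exact add_le_add (hm₁.1 e h1) (hm₂.1 e h2)
      · simp only [h1, h2, if_true, if_false]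
        exact add_le_add (hm₁.1 e h1) le_rfl
    · have h2 : e ∈ S₂ := (mem_union.mp he).resolve_left h1
      simp only [h1, if_false]
      have := hm₂.1 e h2
      linarith
  -- total sum of combined values
  have htot : ∑ e ∈ U, cv e =
      N₁ + N₂ + ((S₁ \ S₂).card : ℝ) * m₂ + ((S₂ \ S₁).card : ℝ) * m₁ := by
    have hsplit : U = S₁ ∪ (S₂ \ S₁) := by
      rw [hUdef, union_sdiff_self_eq_union]
    rw [hsplit, Finset.sum_union disjoint_sdiff]
    have h1 : ∑ e ∈ S₁, cv e
        = N₁ + (∑ e ∈ S₁ ∩ S₂, est₂ e) + ((S₁ \ S₂).card : ℝ) * m₂ := by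
      have hre : ∀ e ∈ S₁, cv e = est₁ e + (if e ∈ S₂ then est₂ e else m₂) := by
        intro e he
        rw [hcv e (mem_union_left _ he)]
        by_cases h2 : e ∈ S₂ <;> simp [he, h2]
      rw [Finset.sum_congr rfl hre, Finset.sum_add_distrib, hN₁, Finset.sum_ite,
        Finset.filter_mem_eq_inter, ← Finset.sdiff_eq_filter, Finset.sum_const,
        nsmul_eq_mul]
      ring
    have h2 : ∑ e ∈ S₂ \ S₁, cv e
        = (∑ e ∈ S₂ \ S₁, est₂ e) + ((S₂ \ S₁).card : ℝ) * m₁ := by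
      have hre : ∀ e ∈ S₂ \ S₁, cv e = est₂ e + m₁ := by
        intro e he
        rcases mem_sdiff.mp he with ⟨he₂, he₁⟩
        rw [hcv e (mem_union_right _ he₂)]
        simp [he₁]
      rw [Finset.sum_congr rfl hre, Finset.sum_add_distrib, Finset.sum_const,
        nsmul_eq_mul]
    have h3 : (∑ e ∈ S₁ ∩ S₂, est₂ e) + (∑ e ∈ S₂ \ S₁, est₂ e) = N₂ := by
      rw [inter_comm, Finset.sum_inter_add_sum_sdiff, hN₂]
    rw [h1, h2]
    linarith
  -- coefficient identity
  have hcoef : ((S₁ \ S₂).card : ℝ) * m₂ + ((S₂ \ S₁).card : ℝ) * m₁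
      = ((U.card - 2 : ℕ) : ℝ) * δ := by
    have cUI : (S₁ ∪ S₂).card + (S₁ ∩ S₂).card = S₁.card + S₂.card :=
      card_union_add_card_inter S₁ S₂
    have c1 : (S₁ \ S₂).card + (S₁ ∩ S₂).card = S₁.card :=
      card_sdiff_add_card_inter S₁ S₂
    have c2 : (S₂ \ S₁).card + (S₁ ∩ S₂).card = S₂.card := by
      rw [inter_comm]; exact card_sdiff_add_card_inter S₂ S₁
    have hU1 : S₁.card ≤ U.card := card_le_card subset_union_left
    have hU2 : S₂.card ≤ U.card := card_le_card subset_union_right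
    have hUcard : U.card = (S₁ ∪ S₂).card := rfl
    by_cases ha : S₁.card = 2 <;> by_cases hb : S₂.card = 2
    · have e1 : (S₁ \ S₂).card = U.card - 2 := by omega
      have e2 : (S₂ \ S₁).card = U.card - 2 := by omega
      rw [e1, e2, hδdef]; ring
    · have h0 : m₂ = 0 := hm₂.2.2 (by omega)
      have e2 : (S₂ \ S₁).card = U.card - 2 := by omega
      rw [h0, e2, hδdef, h0]; ring
    · have h0 : m₁ = 0 := hm₁.2.2 (by omega)
      have e1 : (S₁ \ S₂).card = U.card - 2 := by omega
      rw [h0, e1, hδdef, h0]; ring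
    · have h0 : m₁ = 0 := hm₁.2.2 (by omega)
      have h0' : m₂ = 0 := hm₂.2.2 (by omega)
      rw [h0, h0', hδdef, h0, h0']; ring
  -- witnesses attaining δ
  have hW : ∃ W ⊆ U, W.card = U.card - 2 ∧ ∀ w ∈ W, cv w = δ := by
    have cUI : (S₁ ∪ S₂).card + (S₁ ∩ S₂).card = S₁.card + S₂.card :=
      card_union_add_card_inter S₁ S₂
    have hUcard : U.card = (S₁ ∪ S₂).card := rfl
    have hU4 : U.card ≤ 4 := by
      have := card_union_le S₁ S₂
      omega
    by_cases hle : U.card ≤ 2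
    · exact ⟨∅, empty_subset _, by simp; omega, by simp⟩
    · by_cases h3 : U.card = 3
      · -- one witness suffices
        have hw : ∃ w ∈ U, cv w = δ := by
          by_cases ha : S₁.card = 2
          · obtain ⟨a, haS, hea⟩ := hm₁.2.1 ha
            by_cases ha2 : a ∈ S₂
            · have hi : 1 ≤ (S₁ ∩ S₂).card :=
                card_pos.mpr ⟨a, mem_inter.mpr ⟨haS, ha2⟩⟩
              have hb : S₂.card = 2 := by omega
              have hi1 : (S₁ ∩ S₂).card = 1 := by omega
              obtain ⟨c, hcS, hec⟩ := hm₂.2.1 hb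
              by_cases hc1 : c ∈ S₁
              · have hca : c = a :=
                  Finset.card_le_one.mp (le_of_eq hi1) c
                    (mem_inter.mpr ⟨hc1, hcS⟩) a (mem_inter.mpr ⟨haS, ha2⟩)
                refine ⟨a, mem_union_left _ haS, ?_⟩
                rw [hcv a (mem_union_left _ haS)]
                simp only [haS, ha2, if_true, hδdef]
                rw [hea, ← hca, hec]
              · refine ⟨c, mem_union_right _ hcS, ?_⟩
                rw [hcv c (mem_union_right _ hcS)]
                simp only [hc1, if_false, hδdef]
                rw [hec]; ring
            · refine ⟨a, mem_union_left _ haS, ?_⟩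
              rw [hcv a (mem_union_left _ haS)]
              simp only [haS, ha2, if_true, if_false, hδdef]
              rw [hea]
          · have hb : S₂.card = 2 := by omega
            obtain ⟨c, hcS, hec⟩ := hm₂.2.1 hb
            have hc1 : c ∉ S₁ := by
              intro h
              have hi : 1 ≤ (S₁ ∩ S₂).card :=
                card_pos.mpr ⟨c, mem_inter.mpr ⟨h, hcS⟩⟩
              omega
            refine ⟨c, mem_union_right _ hcS, ?_⟩
            rw [hcv c (mem_union_right _ hcS)]
            simp only [hc1, if_false, hδdef]
            rw [hec]; ring
        obtain ⟨w, hwU, hwv⟩ := hw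
        refine ⟨{w}, singleton_subset_iff.mpr hwU, by simp; omega, ?_⟩
        intro x hx
        rw [mem_singleton.mp hx]; exact hwv
      · -- U.card = 4 : two disjoint full summaries
        have h4 : U.card = 4 := by omega
        have ha : S₁.card = 2 := by omega
        have hb : S₂.card = 2 := by omega
        have hi0 : (S₁ ∩ S₂).card = 0 := by omega
        have hiempty : S₁ ∩ S₂ = ∅ := card_eq_zero.mp hi0
        obtain ⟨a, haS, hea⟩ := hm₁.2.1 ha
        obtain ⟨c, hcS, hec⟩ := hm₂.2.1 hb
        have ha2 : a ∉ S₂ := by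
          intro h
          exact absurd (mem_inter.mpr ⟨haS, h⟩) (by rw [hiempty]; simp)
        have hc1 : c ∉ S₁ := by
          intro h
          exact absurd (mem_inter.mpr ⟨h, hcS⟩) (by rw [hiempty]; simp)
        have hac : a ≠ c := fun h => hc1 (h ▸ haS)
        refine ⟨{a, c}, ?_, ?_, ?_⟩
        · intro x hx
          rcases mem_insert.mp hx with h | h
          · exact h ▸ mem_union_left _ haS
          · exact (mem_singleton.mp h) ▸ mem_union_right _ hcS
        · rw [card_pair hac]; omega
        · intro w hw
          rcases mem_insert.mp hw with h | h
          · subst h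
            rw [hcv w (mem_union_left _ haS)]
            simp only [haS, ha2, if_true, if_false, hδdef]
            rw [hea]
          · rw [mem_singleton.mp h]
            rw [hcv c (mem_union_right _ hcS)]
            simp only [hc1, if_false, hδdef]
            rw [hec]; ring
  obtain ⟨W, hWU, hWcard, hWval⟩ := hW
  have hDcard : (U \ T).card = U.card - 2 := by
    rw [card_sdiff_of_subset hT, hTcard]
    omega
  -- sum over discarded counters
  have hsumD : ∑ g ∈ U \ T, cv g = ((U.card - 2 : ℕ) : ℝ) * δ := by
    by_cases h : ∃ w ∈ W, w ∈ T
    · obtain ⟨w, hwW, hwT⟩ := h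
      have hall : ∀ g ∈ U \ T, cv g = δ := by
        intro g hg
        have h1 : δ ≤ cv g := hδle g (mem_sdiff.mp hg).1
        have h2 : cv g ≤ cv w := hTmax w hwT g hg
        rw [hWval w hwW] at h2
        linarith
      rw [Finset.sum_congr rfl hall, Finset.sum_const, hDcard, nsmul_eq_mul]
    · push_neg at h
      have hWD : W ⊆ U \ T := fun w hw => mem_sdiff.mpr ⟨hWU hw, h w hw⟩
      have hWeq : W = U \ T :=
        Finset.eq_of_subset_of_card_le hWD (by rw [hDcard, hWcard])
      rw [← hWeq, Finset.sum_congr rfl hWval, Finset.sum_const, hWcard,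
        nsmul_eq_mul]
  have hsplit : ∑ g ∈ U \ T, cv g + ∑ e ∈ T, cv e = ∑ e ∈ U, cv e :=
    Finset.sum_sdiff hT
  constructor
  · linarith [hsumD, hcoef, htot, hsplit]
  · exact hsumD
end

section
/- (Merge preserves the upper-bound error.) Under the combine rule with merged summary S_M keeping the 2 largest counters of S_C, for every monitored item e ∈ Σ_M: f̂_{S_M}(e) - f̂_{S_M}^min ≤ f_N(e) ≤ f̂_{S_M}(e), and for every unmonitored item e ∉ Σ_M: f_N(e) ≤ f̂_{S_M}^min, provided S₁ and S₂ each satisfy the analogous properties for their respective sub-streams, where f_N = f_{N₁} + f_{N₂}. -/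
open Finset in
/-- Merging preserves the Space Saving error bounds: if `S₁`, `S₂` are
2-counter summaries of disjoint decayed sub-streams `N₁`, `N₂` satisfying the
Space Saving properties, then the merged summary `S_M` (combine, keep the two
largest counters) satisfies them for the combined stream `f = f₁ + f₂`. -/
theorem merge_preserves_error_bounds
    {α : Type*} [Fintype α] [DecidableEq α]
    (S₁ S₂ : Finset α) (hc₁ : S₁.card ≤ 2) (hc₂ : S₂.card ≤ 2)
    (est₁ est₂ : α → ℝ) (m₁ m₂ : ℝ)
    (f₁ f₂ : α → ℝ) (hf₁ : ∀ e, 0 ≤ f₁ e) (hf₂ : ∀ e, 0 ≤ f₂ e)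
    (hm₁ : (∀ e ∈ S₁, m₁ ≤ est₁ e) ∧ (S₁.card = 2 → ∃ e ∈ S₁, est₁ e = m₁) ∧
      (S₁.card < 2 → m₁ = 0))
    (hm₂ : (∀ e ∈ S₂, m₂ ≤ est₂ e) ∧ (S₂.card = 2 → ∃ e ∈ S₂, est₂ e = m₂) ∧
      (S₂.card < 2 → m₂ = 0))
    (hSS₁ : ∀ e ∈ S₁, est₁ e - m₁ ≤ f₁ e ∧ f₁ e ≤ est₁ e)
    (hSS₁' : ∀ e ∉ S₁, f₁ e ≤ m₁)
    (hSS₂ : ∀ e ∈ S₂, est₂ e - m₂ ≤ f₂ e ∧ f₂ e ≤ est₂ e)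
    (hSS₂' : ∀ e ∉ S₂, f₂ e ≤ m₂)
    (hsize₁ : ∑ e ∈ S₁, est₁ e ≤ ∑ e, f₁ e)
    (hsize₂ : ∑ e ∈ S₂, est₂ e ≤ ∑ e, f₂ e)
    (cv : α → ℝ)
    (hcv : ∀ e ∈ S₁ ∪ S₂, cv e =
      (if e ∈ S₁ then (if e ∈ S₂ then est₁ e + est₂ e else est₁ e + m₂)
       else est₂ e + m₁))
    (T : Finset α) (hT : T ⊆ S₁ ∪ S₂)
    (hTcard : T.card = min (S₁ ∪ S₂).card 2)
    (hTmax : ∀ e ∈ T, ∀ g ∈ (S₁ ∪ S₂) \ T, cv g ≤ cv e)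
    (mM : ℝ)
    (hmM : (∀ e ∈ T, mM ≤ cv e) ∧ (T.card = 2 → ∃ e ∈ T, cv e = mM) ∧
      (T.card < 2 → mM = 0)) :
    (∀ e ∈ T, cv e - mM ≤ f₁ e + f₂ e ∧ f₁ e + f₂ e ≤ cv e) ∧
    (∀ e ∉ T, f₁ e + f₂ e ≤ mM) := by
  obtain ⟨hm₁a, hm₁b, hm₁c⟩ := hm₁
  obtain ⟨hm₂a, hm₂b, hm₂c⟩ := hm₂
  obtain ⟨hmMa, hmMb, hmMc⟩ := hmM
  -- basic bounds on combined counter values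
  have L : ∀ e ∈ S₁ ∪ S₂, f₁ e + f₂ e ≤ cv e ∧ cv e ≤ f₁ e + f₂ e + (m₁ + m₂)
      ∧ m₁ + m₂ ≤ cv e := by
    intro e he
    rw [hcv e he]
    by_cases h1 : e ∈ S₁
    · by_cases h2 : e ∈ S₂
      · have a := hSS₁ e h1; have b := hSS₂ e h2
        have c := hm₁a e h1; have d := hm₂a e h2
        simp only [if_pos h1, if_pos h2]
        refine ⟨by linarith [a.2, b.2], by linarith [a.1, b.1], by linarith⟩
      · have a := hSS₁ e h1; have b := hSS₂' e h2
        have c := hm₁a e h1; have d := hf₂ e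
        simp only [if_pos h1, if_neg h2]
        refine ⟨by linarith [a.2], by linarith [a.1], by linarith⟩
    · have h2 : e ∈ S₂ := by
        rcases Finset.mem_union.1 he with h | h
        · exact absurd h h1
        · exact h
      have a := hSS₂ e h2; have b := hSS₁' e h1
      have c := hm₂a e h2; have d := hf₁ e
      simp only [if_neg h1]
      refine ⟨by linarith [a.2], by linarith [a.1], by linarith⟩
  -- case of small T
  have hsmall : T.card < 2 → m₁ = 0 ∧ m₂ = 0 ∧ T = S₁ ∪ S₂ := by
    intro h
    have hu : (S₁ ∪ S₂).card < 2 := by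
      by_contra hge
      push_neg at hge
      rw [hTcard, min_eq_right hge] at h
      exact lt_irrefl _ h
    have h1 : S₁.card < 2 :=
      lt_of_le_of_lt (Finset.card_le_card Finset.subset_union_left) hu
    have h2 : S₂.card < 2 :=
      lt_of_le_of_lt (Finset.card_le_card Finset.subset_union_right) hu
    refine ⟨hm₁c h1, hm₂c h2, ?_⟩
    apply Finset.eq_of_subset_of_card_le hT
    rw [hTcard, min_eq_left hu.le]
  -- case of full T : mM dominates m₁ + m₂
  have hbig : T.card = 2 → m₁ + m₂ ≤ mM := by
    intro h
    obtain ⟨t, ht, hcvt⟩ := hmMb h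
    have := (L t (hT ht)).2.2
    linarith
  constructor
  · intro e he
    have hLe := L e (hT he)
    refine ⟨?_, hLe.1⟩
    by_cases h2 : T.card = 2
    · have := hbig h2
      linarith [hLe.2.1]
    · have hlt : T.card < 2 := by
        have := hTcard ▸ min_le_right (S₁ ∪ S₂).card 2
        omega
      obtain ⟨e1, e2, _⟩ := hsmall hlt
      rw [hmMc hlt]
      rw [e1, e2] at hLe
      linarith [hLe.2.1]
  · intro e he
    by_cases heu : e ∈ S₁ ∪ S₂
    · -- e is in the union but not kept; so T.card = 2
      have hne : T ≠ S₁ ∪ S₂ := by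
        intro h; rw [h] at he; exact he heu
      have h2 : T.card = 2 := by
        by_cases h : T.card = 2
        · exact h
        · have hlt : T.card < 2 := by
            have := hTcard ▸ min_le_right (S₁ ∪ S₂).card 2
            omega
          exact absurd (hsmall hlt).2.2 hne
      obtain ⟨t, ht, hcvt⟩ := hmMb h2
      have hmax := hTmax t ht e (Finset.mem_sdiff.2 ⟨heu, he⟩)
      have := (L e heu).1
      linarith
    · -- e is outside the union
      have a : f₁ e ≤ m₁ := hSS₁' e (fun h => heu (Finset.mem_union_left _ h))
      have b : f₂ e ≤ m₂ := hSS₂' e (fun h => heu (Finset.mem_union_right _ h))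
      by_cases h2 : T.card = 2
      · have := hbig h2; linarith
      · have hlt : T.card < 2 := by
          have := hTcard ▸ min_le_right (S₁ ∪ S₂).card 2
          omega
        obtain ⟨e1, e2, _⟩ := hsmall hlt
        rw [hmMc hlt]
        linarith [e1 ▸ a, e2 ▸ b]
end

section
/- The Space Saving update with weighted increments preserves the invariant |S| = total processed weight and the overestimation property: after processing any sequence of (item, weight) pairs with positive weights on a 2-counter summary, the sum of the counters equals the sum of all processed weights, and every item's true accumulated weight is at most its counter value (if monitored) or at most the minimum counter value (if not monitored). -/
/-- A 2-counter Space Saving summary: two optionally-occupied counters with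
monitored items `i₁`, `i₂` and values `c₁`, `c₂`. -/
structure SS2 (α : Type*) where
  i₁ : Option α
  i₂ : Option α
  c₁ : ℝ
  c₂ : ℝ

/-- Weighted Space Saving update: if the arriving item is monitored, add its
weight to the corresponding counter; else occupy an empty counter; else add the
weight to the minimum counter and replace its monitored item. -/
noncomputable def SS2.update {α : Type*} [DecidableEq α] (s : SS2 α) (i : α) (x : ℝ) : SS2 α :=
  if s.i₁ = some i then { s with c₁ := s.c₁ + x }
  else if s.i₂ = some i then { s with c₂ := s.c₂ + x }
  else if s.i₁ = none then { s with i₁ := some i, c₁ := x }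
  else if s.i₂ = none then { s with i₂ := some i, c₂ := x }
  else if s.c₁ ≤ s.c₂ then { s with i₁ := some i, c₁ := s.c₁ + x }
  else { s with i₂ := some i, c₂ := s.c₂ + x }

/-- Processing a sequence of (item, weight) pairs starting from the empty summary. -/
noncomputable def SS2.process {α : Type*} [DecidableEq α] (l : List (α × ℝ)) : SS2 α :=
  l.foldl (fun s p => s.update p.1 p.2) ⟨none, none, 0, 0⟩

/-- The estimated frequency of `v`: its counter value if monitored, else the
minimum counter value. -/
def SS2.est {α : Type*} [DecidableEq α] (s : SS2 α) (v : α) : ℝ :=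
  if s.i₁ = some v then s.c₁ else if s.i₂ = some v then s.c₂ else min s.c₁ s.c₂

/-- The true accumulated weight of item `v` in the processed prefix. -/
def trueWeight {α : Type*} [DecidableEq α] (l : List (α × ℝ)) (v : α) : ℝ :=
  ((l.filter (fun p => p.1 = v)).map Prod.snd).sum

section Aux
variable {α : Type*} [DecidableEq α]

def SS2.Inv (s : SS2 α) (f : α → ℝ) (T : ℝ) : Prop :=
  s.c₁ + s.c₂ = T ∧ 0 ≤ s.c₁ ∧ 0 ≤ s.c₂ ∧
  (s.i₁ = none → s.c₁ = 0) ∧ (s.i₂ = none → s.c₂ = 0) ∧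
  (∀ v : α, s.i₁ = some v → s.i₂ ≠ some v) ∧
  ∀ v, f v ≤ s.est v

set_option maxHeartbeats 2000000 in
lemma SS2.inv_update {s : SS2 α} {f : α → ℝ} {T : ℝ} (h : s.Inv f T)
    {i : α} {x : ℝ} (hx : 0 < x) :
    (s.update i x).Inv (fun v => f v + if i = v then x else 0) (T + x) := by
  obtain ⟨hsum, h1, h2, he1, he2, hd, hest⟩ := h
  have hm1 := min_le_left s.c₁ s.c₂
  have hm2 := min_le_right s.c₁ s.c₂
  unfold SS2.update
  split_ifs with hA hB hC hD hE <;>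
  refine ⟨?_, ?_, ?_, ?_, ?_, ?_, ?_⟩ <;>
  first
  | (dsimp only; linarith)
  | (dsimp only; linarith [he1 ‹s.i₁ = none›])
  | (dsimp only; linarith [he2 ‹s.i₂ = none›])
  | (dsimp only; exact he1)
  | (dsimp only; exact he2)
  | (intro v hv hv2; try dsimp only at hv hv2
     first
     | exact hd v hv hv2
     | exact hd v hv hv2
     | (simp_all; done))
  | (intro hn; simp_all; done)
  | (intro v
     have hv := hest v
     have hvi := hest i
     simp only [SS2.est] at hv hvi ⊢
     try dsimp only
     rcases eq_or_ne i v with rfl | hne <;>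
     split_ifs at hv hvi ⊢ <;>
     simp_all <;>
     first
     | linarith
     | (constructor <;> linarith)
     | (refine le_min ?_ ?_ <;> linarith))

lemma trueWeight_cons (a : α) (x : ℝ) (l : List (α × ℝ)) (v : α) :
    trueWeight ((a, x) :: l) v = (if a = v then x else 0) + trueWeight l v := by
  simp only [trueWeight, List.filter_cons]
  split_ifs with h <;> simp_all

lemma SS2.inv_congr {s : SS2 α} {f g : α → ℝ} {T T' : ℝ} (h : s.Inv f T)
    (hfg : ∀ v, g v ≤ f v) (hT : T = T') : s.Inv g T' := by
  obtain ⟨hsum, h1, h2, he1, he2, hd, hest⟩ := h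
  exact ⟨hT ▸ hsum, h1, h2, he1, he2, hd, fun v => (hfg v).trans (hest v)⟩

lemma SS2.inv_foldl (l : List (α × ℝ)) (hpos : ∀ p ∈ l, 0 < p.2)
    (s : SS2 α) (f : α → ℝ) (T : ℝ) (h : s.Inv f T) :
    (l.foldl (fun s p => s.update p.1 p.2) s).Inv
      (fun v => f v + trueWeight l v) (T + (l.map Prod.snd).sum) := by
  induction l generalizing s f T with
  | nil => simpa [trueWeight] using h
  | cons p l ih =>
    obtain ⟨a, x⟩ := p
    have hx : 0 < x := hpos (a, x) (by simp)
    have h' := SS2.inv_update h (i := a) (x := x) hx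
    have := ih (fun q hq => hpos q (List.mem_cons_of_mem _ hq)) _ _ _ h'
    refine SS2.inv_congr this (fun v => ?_) ?_
    · rw [trueWeight_cons]; ring_nf; exact le_refl _
    · simp; ring

end Aux

/-- The weighted Space Saving update preserves the invariant
`|S| = total processed weight` and the overestimation property: every item's
true accumulated weight is at most its counter value (if monitored) or at most
the minimum counter value (if not monitored). -/


theorem SS2.process_invariants {α : Type*} [DecidableEq α]
    (l : List (α × ℝ)) (hpos : ∀ p ∈ l, 0 < p.2) :
    (SS2.process (α := α) l).c₁ + (SS2.process (α := α) l).c₂ =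
      (l.map Prod.snd).sum ∧
    ∀ v : α, trueWeight l v ≤ (SS2.process (α := α) l).est v := by
  have h0 : (⟨none, none, 0, 0⟩ : SS2 α).Inv (fun _ => 0) 0 :=
    ⟨by simp, le_rfl, le_rfl, fun _ => rfl, fun _ => rfl, by simp,
     fun v => by simp [SS2.est]⟩
  obtain ⟨hsum, -, -, -, -, -, hest⟩ := SS2.inv_foldl l hpos _ _ _ h0
  exact ⟨by simpa [SS2.process] using hsum, fun v => by simpa [SS2.process] using hest v⟩
end

section
/- If every φ-heavy hitter passes the candidate filter and the point estimate p satisfies f_v ≤ p ≤ f_v + εC with ε < φ, then the output set F of the query (items whose point estimate exceeds φC) contains all items with f_v > φC and no item with f_v ≤ (φ - ε)C. -/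
/-- ATFHH guarantee: if every `φ`-heavy hitter passes the candidate filter and
each candidate's point estimate `p v` satisfies `f v ≤ p v ≤ f v + ε C` with
`ε < φ`, then the output set `F = {v ∈ candidates | p v > φ C}` contains every
item with `f v > φ C` and no item with `f v ≤ (φ - ε) C`. -/
theorem atfhh_guarantee
    {α : Type*} (f p : α → ℝ) (C φ ε : ℝ)
    (hε : 0 < ε) (hεφ : ε < φ) (hφ : φ < 1) (hC : 0 < C)
    (cand F : Set α)
    (hcand : ∀ v, f v > φ * C → v ∈ cand)
    (hest : ∀ v ∈ cand, f v ≤ p v ∧ p v ≤ f v + ε * C)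
    (hF : F = {v ∈ cand | p v > φ * C}) :
    (∀ v, f v > φ * C → v ∈ F) ∧
    (∀ v ∈ F, ¬ f v ≤ (φ - ε) * C) := by
  subst hF
  constructor
  · intro v hv
    have hc := hcand v hv
    exact ⟨hc, lt_of_lt_of_le hv (hest v hc).1⟩
  · rintro v ⟨hc, hp⟩ hle
    have h2 := (hest v hc).2
    nlinarith
end
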